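/- Let X be a completely regular Hausdorff (Tychonoff) space and let H be a non-vanishing closed ideal of C_B(X). Then the following are equivalent: (1) sp(H) is countably compact; (2) for every sequence H₁, H₂, … of closed subideals of H, if H equals the closure in C_B(X) of ∑_{n=1}^∞ H_n, then H equals the closure of ∑_{n=1}^m H_n for some positive integer m; (3) for every increasing sequence H₁ ⊆ H₂ ⊆ ⋯ of proper closed subideals of H, H is not equal to the closure in C_B(X) of ⋃_{n=1}^∞ H_n. -/

import Mathlib

open BoundedContinuousFunction Set Filter Topology

section Preamble

variable {X : Type*} [TopologicalSpace X] {𝕜 : Type*} [RCLike 𝕜]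

theorem betaExt_aux (f : X →ᵇ 𝕜) :
    Continuous (fun x => (⟨f x, by
      simpa [Metric.mem_closedBall, dist_zero_right] using f.norm_coe_le_norm x⟩ :
        Metric.closedBall (0 : 𝕜) ‖f‖)) :=
  f.continuous.subtype_mk _

/-- `f_β`, the unique continuous extension of a bounded continuous function `f : X → 𝕜` to the
Stone–Čech compactification `βX`. -/
noncomputable def betaExt (f : X →ᵇ 𝕜) : StoneCech X → 𝕜 :=
  haveI : CompactSpace (Metric.closedBall (0 : 𝕜) ‖f‖) :=
    isCompact_iff_compactSpace.mp (isCompact_closedBall 0 ‖f‖)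
  fun p => (stoneCechExtend (betaExt_aux f) p).1

theorem betaExt_unit (f : X →ᵇ 𝕜) (x : X) : betaExt f (stoneCechUnit x) = f x := by
  haveI : CompactSpace (Metric.closedBall (0 : 𝕜) ‖f‖) :=
    isCompact_iff_compactSpace.mp (isCompact_closedBall 0 ‖f‖)
  exact congrArg Subtype.val (congrFun (stoneCechExtend_extends (betaExt_aux f)) x)

theorem continuous_betaExt (f : X →ᵇ 𝕜) : Continuous (betaExt f) := by
  haveI : CompactSpace (Metric.closedBall (0 : 𝕜) ‖f‖) :=
    isCompact_iff_compactSpace.mp (isCompact_closedBall 0 ‖f‖)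
  exact continuous_subtype_val.comp (continuous_stoneCechExtend _)

/-- `λ_G X`, the union over `g ∈ G` of the cozero-sets in `βX` of the extensions `g_β`. -/
def lambdaSet (G : Ideal (X →ᵇ 𝕜)) : Set (StoneCech X) :=
  ⋃ g ∈ G, {p | betaExt g p ≠ 0}

end Preamble

/-- A (Hausdorff) space is countably compact if every countable open cover has a finite
subcover. -/
def CountablyCompactSpace' (Y : Type*) [TopologicalSpace Y] : Prop :=
  T2Space Y ∧
    ∀ U : ℕ → Set Y, (∀ n, IsOpen (U n)) → (⋃ n, U n) = univ →
      ∃ t : Finset ℕ, (⋃ n ∈ t, U n) = univ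

section Transfer

variable {X : Type*} [TopologicalSpace X] {𝕜 : Type*} [RCLike 𝕜]

theorem stoneCech_fun_ext {f g : StoneCech X → 𝕜} (hf : Continuous f) (hg : Continuous g)
    (h : ∀ x, f (stoneCechUnit x) = g (stoneCechUnit x)) : f = g :=
  Continuous.ext_on denseRange_stoneCechUnit hf hg fun _ hp => by
    obtain ⟨x, rfl⟩ := hp; exact h x

theorem norm_betaExt_le (f : X →ᵇ 𝕜) (p : StoneCech X) : ‖betaExt f p‖ ≤ ‖f‖ := by
  haveI : CompactSpace (Metric.closedBall (0 : 𝕜) ‖f‖) :=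
    isCompact_iff_compactSpace.mp (isCompact_closedBall 0 ‖f‖)
  have h2 := (stoneCechExtend (betaExt_aux f) p).2
  rw [Metric.mem_closedBall, dist_zero_right] at h2
  exact h2

/-- `betaExt f` bundled as a continuous map on `βX`. -/
noncomputable def betaCM (f : X →ᵇ 𝕜) : C(StoneCech X, 𝕜) :=
  ⟨betaExt f, continuous_betaExt f⟩

@[simp] theorem betaCM_apply (f : X →ᵇ 𝕜) (p : StoneCech X) : betaCM f p = betaExt f p := rfl

/-- The ring isomorphism `C_B(X) ≃ C(βX)`. -/
noncomputable def betaEquiv : (X →ᵇ 𝕜) ≃+* C(StoneCech X, 𝕜) where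
  toFun := betaCM
  invFun g := (mkOfCompact g).compContinuous ⟨stoneCechUnit, continuous_stoneCechUnit⟩
  left_inv f := by ext x; exact betaExt_unit f x
  right_inv g := by
    ext p
    exact congrFun
      (stoneCech_fun_ext (continuous_betaExt _) g.continuous fun x => betaExt_unit _ x) p
  map_mul' f g := by
    ext p
    exact congrFun (stoneCech_fun_ext (continuous_betaExt (f * g))
      ((continuous_betaExt f).mul (continuous_betaExt g)) (fun x => by
        simp [betaExt_unit])) p
  map_add' f g := by
    ext p
    exact congrFun (stoneCech_fun_ext (continuous_betaExt (f + g))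
      ((continuous_betaExt f).add (continuous_betaExt g)) (fun x => by
        simp [betaExt_unit])) p

theorem betaEquiv_apply (f : X →ᵇ 𝕜) : betaEquiv f = betaCM f := rfl

theorem norm_betaCM (f : X →ᵇ 𝕜) : ‖betaCM f‖ = ‖f‖ := by
  refine le_antisymm ((ContinuousMap.norm_le _ (norm_nonneg f)).mpr fun p => norm_betaExt_le f p)
    ((norm_le (norm_nonneg _)).mpr fun x => ?_)
  calc ‖f x‖ = ‖betaCM f (stoneCechUnit x)‖ := by rw [betaCM_apply, betaExt_unit]
    _ ≤ ‖betaCM f‖ := (betaCM f).norm_coe_le_norm _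

theorem isometry_betaCM : Isometry (betaCM : (X →ᵇ 𝕜) → C(StoneCech X, 𝕜)) :=
  Isometry.of_dist_eq fun f g => by
    calc dist (betaCM f) (betaCM g) = ‖betaCM f - betaCM g‖ := dist_eq_norm _ _
      _ = ‖betaCM (f - g)‖ := by rw [show betaCM (f - g) = betaCM f - betaCM g from
            map_sub (betaEquiv (X := X) (𝕜 := 𝕜)) f g]
      _ = ‖f - g‖ := norm_betaCM _
      _ = dist f g := (dist_eq_norm f g).symm

/-- The homeomorphism `C_B(X) ≃ₜ C(βX)`. -/
noncomputable def betaHomeo : (X →ᵇ 𝕜) ≃ₜ C(StoneCech X, 𝕜) :=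
  IsometryEquiv.toHomeomorph ⟨(betaEquiv : (X →ᵇ 𝕜) ≃+* C(StoneCech X, 𝕜)).toEquiv, isometry_betaCM⟩

@[simp] theorem betaHomeo_coe : ⇑(betaHomeo (X := X) (𝕜 := 𝕜)) = betaCM := rfl

theorem setOfIdeal_iSup {K : Type*} [TopologicalSpace K] {R : Type*} [Semiring R]
    [TopologicalSpace R] [IsTopologicalSemiring R] {ι : Sort*} (J : ι → Ideal C(K, R)) :
    ContinuousMap.setOfIdeal (⨆ i, J i) = ⋃ i, ContinuousMap.setOfIdeal (J i) := by
  rw [(ContinuousMap.ideal_gc K R).l_iSup]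
  exact Set.iSup_eq_iUnion _

end Transfer

/-- The purely topological part: for an open subset `U` of a `T2` space, countable compactness
of `U` is equivalent to the two covering conditions. -/
theorem top_tfae {K : Type*} [TopologicalSpace K] [T2Space K] {U : Set K} (hU : IsOpen U) :
    List.TFAE [CountablyCompactSpace' U,
      ∀ V : ℕ → Set K, (∀ n, IsOpen (V n)) → (∀ n, V n ⊆ U) → U = ⋃ n, V n →
        ∃ m, 0 < m ∧ U = ⋃ n ∈ Finset.range m, V n,
      ∀ V : ℕ → Set K, (∀ n, IsOpen (V n)) → (∀ n, V n ⊆ U) → (∀ n, V n ≠ U) → Monotone V →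
        U ≠ ⋃ n, V n] := by
  tfae_have 1 → 2 := by
    rintro ⟨-, hcc⟩ V hVopen hVsub hVcover
    obtain ⟨t, ht⟩ := hcc (fun n => Subtype.val ⁻¹' V n)
      (fun n => (hVopen n).preimage continuous_subtype_val) (by
        ext u
        simp only [Set.mem_iUnion, Set.mem_preimage, Set.mem_univ, iff_true]
        exact Set.mem_iUnion.mp (hVcover.le u.2))
    refine ⟨t.sup id + 1, Nat.succ_pos _, subset_antisymm (fun x hx => ?_)
      (Set.iUnion₂_subset fun n _ => hVsub n)⟩
    have : (⟨x, hx⟩ : U) ∈ ⋃ n ∈ t, Subtype.val ⁻¹' V n := ht ▸ Set.mem_univ _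
    obtain ⟨n, hn, hxn⟩ := Set.mem_iUnion₂.mp this
    exact Set.mem_iUnion₂.mpr ⟨n, Finset.mem_range.mpr
      (Nat.lt_succ_of_le (Finset.le_sup (f := id) hn)), hxn⟩
  tfae_have 2 → 3 := by
    intro h2 V hVopen hVsub hVne hVmono hEq
    obtain ⟨m, hm, hUm⟩ := h2 V hVopen hVsub hEq
    have : ⋃ n ∈ Finset.range m, V n = V (m - 1) := by
      refine subset_antisymm (Set.iUnion₂_subset fun n hn => hVmono ?_)
        (Set.subset_iUnion₂ (s := fun (n : ℕ) (_ : n ∈ Finset.range m) => V n) (m - 1) (Finset.mem_range.mpr (Nat.sub_lt hm one_pos)))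
      exact Nat.le_sub_one_of_lt (Finset.mem_range.mp hn)
    exact hVne (m - 1) ((hUm.trans this).symm)
  tfae_have 3 → 1 := by
    intro h3
    refine ⟨inferInstance, fun W hWopen hWcover => ?_⟩
    choose W' hW'open hW'pre using fun n => isOpen_induced_iff.mp (hWopen n)
    set V : ℕ → Set K := fun n => (⋃ k, ⋃ _ : k ≤ n, W' k) ∩ U with hV
    have hVopen : ∀ n, IsOpen (V n) :=
      fun n => (isOpen_iUnion fun k => isOpen_iUnion fun _ => hW'open k).inter hU
    have hVsub : ∀ n, V n ⊆ U := fun n => Set.inter_subset_right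
    have hVmono : Monotone V := by
      intro a b hab x hx
      obtain ⟨hx1, hx2⟩ := hx
      obtain ⟨k, hk, hxk⟩ := Set.mem_iUnion₂.mp hx1
      exact ⟨Set.mem_iUnion₂.mpr ⟨k, hk.trans hab, hxk⟩, hx2⟩
    have hVcover : U = ⋃ n, V n := by
      refine subset_antisymm (fun x hx => ?_) (Set.iUnion_subset hVsub)
      have : (⟨x, hx⟩ : U) ∈ ⋃ n, W n := hWcover ▸ Set.mem_univ _
      obtain ⟨n, hn⟩ := Set.mem_iUnion.mp this
      rw [← hW'pre n] at hn
      exact Set.mem_iUnion.mpr ⟨n, Set.mem_iUnion₂.mpr ⟨n, le_refl n, hn⟩, hx⟩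
    by_contra hfin
    push_neg at hfin
    have hVne : ∀ n, V n ≠ U := by
      intro n hVn
      refine hfin (Finset.range (n + 1)) (Set.eq_univ_iff_forall.mpr fun u => ?_)
      have hu : u.1 ∈ V n := hVn.symm ▸ u.2
      obtain ⟨k, hk, hxk⟩ := Set.mem_iUnion₂.mp hu.1
      refine Set.mem_iUnion₂.mpr ⟨k, Finset.mem_range.mpr (Nat.lt_succ_of_le hk), ?_⟩
      rw [← hW'pre k]
      exact hxk
    exact h3 V hVopen hVsub hVne hVmono hVcover
  tfae_finish

/-- For a Tychonoff space `X` and a non-vanishing closed ideal `H` of `C_B(X)`, the following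
are equivalent: (1) `sp(H)` is countably compact; (2) whenever `H` is the closure of the sum of
a sequence of closed subideals, it is the closure of a finite partial sum; (3) for every
increasing sequence of proper closed subideals of `H`, `H` is not the closure of their
union. -/
theorem spectrum_countablyCompact_tfae {X : Type*} [TopologicalSpace X] [T35Space X]
    {𝕜 : Type*} [RCLike 𝕜] (H : Ideal (X →ᵇ 𝕜))
    (hcl : IsClosed (H : Set (X →ᵇ 𝕜))) (hnv : ∀ x : X, ∃ h ∈ H, h x ≠ 0) :
    List.TFAE
      [CountablyCompactSpace' (lambdaSet H),
       ∀ Hs : ℕ → Ideal (X →ᵇ 𝕜),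
         (∀ n, IsClosed ((Hs n : Set (X →ᵇ 𝕜)))) → (∀ n, Hs n ≤ H) →
         (H : Set (X →ᵇ 𝕜)) = closure ((⨆ n, Hs n : Ideal (X →ᵇ 𝕜)) : Set (X →ᵇ 𝕜)) →
         ∃ m : ℕ, 0 < m ∧
           (H : Set (X →ᵇ 𝕜)) =
             closure ((⨆ n ∈ Finset.range m, Hs n : Ideal (X →ᵇ 𝕜)) : Set (X →ᵇ 𝕜)),
       ∀ Hs : ℕ → Ideal (X →ᵇ 𝕜),
         (∀ n, IsClosed ((Hs n : Set (X →ᵇ 𝕜)))) → (∀ n, Hs n ≤ H) → (∀ n, Hs n ≠ H) →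
         Monotone Hs →
         (H : Set (X →ᵇ 𝕜)) ≠ closure (⋃ n, (Hs n : Set (X →ᵇ 𝕜)))] := by
  classical
  let Φ : (X →ᵇ 𝕜) ≃+* C(StoneCech X, 𝕜) := betaEquiv
  let T : Ideal (X →ᵇ 𝕜) → Ideal C(StoneCech X, 𝕜) :=
    fun G => Ideal.map (Φ : (X →ᵇ 𝕜) →+* C(StoneCech X, 𝕜)) G
  have Tmem : ∀ (G : Ideal (X →ᵇ 𝕜)) (g : C(StoneCech X, 𝕜)),
      g ∈ T G ↔ ∃ f ∈ G, betaCM f = g := by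
    intro G g
    constructor
    · intro h
      obtain ⟨x, hx, rfl⟩ := (Ideal.mem_map_iff_of_surjective _ Φ.surjective).mp h
      exact ⟨x, hx, rfl⟩
    · rintro ⟨f, hf, rfl⟩
      exact Ideal.mem_map_of_mem _ hf
  have hinj : Function.Injective (betaCM : (X →ᵇ 𝕜) → C(StoneCech X, 𝕜)) :=
    fun a b h => Φ.injective h
  have Tcoe : ∀ G : Ideal (X →ᵇ 𝕜),
      (T G : Set C(StoneCech X, 𝕜)) = betaCM '' (G : Set (X →ᵇ 𝕜)) := by
    intro G
    ext g
    rw [SetLike.mem_coe, Tmem]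
    exact ⟨fun ⟨f, hf, h⟩ => ⟨f, hf, h⟩, fun ⟨f, hf, h⟩ => ⟨f, hf, h⟩⟩
  have Tle : ∀ {G₁ G₂ : Ideal (X →ᵇ 𝕜)}, T G₁ ≤ T G₂ ↔ G₁ ≤ G₂ := by
    intro G₁ G₂
    constructor
    · intro h f hf
      obtain ⟨f', hf', hff⟩ := (Tmem G₂ (betaCM f)).mp (h ((Tmem G₁ _).mpr ⟨f, hf, rfl⟩))
      rwa [← hinj hff]
    · intro h g hg
      obtain ⟨f, hf, rfl⟩ := (Tmem G₁ g).mp hg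
      exact (Tmem G₂ _).mpr ⟨f, h hf, rfl⟩
  have Tinj : ∀ {G₁ G₂ : Ideal (X →ᵇ 𝕜)}, T G₁ = T G₂ → G₁ = G₂ := fun h =>
    le_antisymm (Tle.mp h.le) (Tle.mp h.ge)
  have Tclosed : ∀ {G : Ideal (X →ᵇ 𝕜)}, IsClosed (G : Set (X →ᵇ 𝕜)) →
      IsClosed (T G : Set C(StoneCech X, 𝕜)) := by
    intro G hG
    rw [Tcoe, ← betaHomeo_coe]
    exact (Homeomorph.isClosed_image _).mpr hG
  set U : Set (StoneCech X) := ContinuousMap.setOfIdeal (T H) with hUdef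
  have hUopen : IsOpen U := ContinuousMap.setOfIdeal_open _
  have hTH : T H = ContinuousMap.idealOfSet 𝕜 U :=
    (ContinuousMap.idealOfSet_ofIdeal_isClosed (Tclosed hcl)).symm
  have keyEq : ∀ G : Ideal (X →ᵇ 𝕜),
      ((H : Set (X →ᵇ 𝕜)) = closure (G : Set (X →ᵇ 𝕜))) ↔
        U = ContinuousMap.setOfIdeal (T G) := by
    intro G
    have h1 : ((H : Set (X →ᵇ 𝕜)) = closure (G : Set (X →ᵇ 𝕜))) ↔
        (T H : Set C(StoneCech X, 𝕜)) = closure (T G : Set C(StoneCech X, 𝕜)) := by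
      rw [Tcoe, Tcoe, ← betaHomeo_coe, ← Homeomorph.image_closure]
      exact ((Set.image_injective.mpr (betaHomeo (X := X) (𝕜 := 𝕜)).injective).eq_iff).symm
    rw [h1]
    constructor
    · intro h
      have h2 : T H = (T G).closure :=
        SetLike.coe_injective (by rw [Ideal.coe_closure]; exact h)
      rw [hTH, ← ContinuousMap.idealOfSet_ofIdeal_eq_closure] at h2
      have h4 := congrArg ContinuousMap.setOfIdeal h2
      rwa [ContinuousMap.setOfIdeal_ofSet_of_isOpen 𝕜 hUopen,
        ContinuousMap.setOfIdeal_ofSet_of_isOpen 𝕜 (ContinuousMap.setOfIdeal_open _)] at h4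
    · intro h
      have h2 : T H = (T G).closure := by
        rw [hTH, h, ContinuousMap.idealOfSet_ofIdeal_eq_closure]
      have h4 := congrArg (fun I : Ideal C(StoneCech X, 𝕜) => (I : Set C(StoneCech X, 𝕜))) h2
      simpa only [Ideal.coe_closure] using h4
  have hlam : lambdaSet H = U := by
    ext p
    simp only [lambdaSet, Set.mem_iUnion, Set.mem_setOf_eq, hUdef, ContinuousMap.mem_setOfIdeal]
    constructor
    · rintro ⟨g, hg, hgp⟩
      exact ⟨betaCM g, (Tmem H _).mpr ⟨g, hg, rfl⟩, hgp⟩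
    · rintro ⟨g', hg', hp⟩
      obtain ⟨g, hg, rfl⟩ := (Tmem H g').mp hg'
      exact ⟨g, hg, hp⟩
  have Ttop := top_tfae (K := StoneCech X) hUopen
  have hTcomap : ∀ W : Set (StoneCech X),
      T (Ideal.comap (Φ : (X →ᵇ 𝕜) →+* C(StoneCech X, 𝕜)) (ContinuousMap.idealOfSet 𝕜 W)) =
        ContinuousMap.idealOfSet 𝕜 W :=
    fun W => Ideal.map_comap_of_surjective _ Φ.surjective _
  have hcomap_closed : ∀ W : Set (StoneCech X),
      IsClosed ((Ideal.comap (Φ : (X →ᵇ 𝕜) →+* C(StoneCech X, 𝕜))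
        (ContinuousMap.idealOfSet 𝕜 W) : Ideal (X →ᵇ 𝕜)) : Set (X →ᵇ 𝕜)) := by
    intro W
    rw [Ideal.coe_comap]
    exact (ContinuousMap.idealOfSet_closed 𝕜 W).preimage isometry_betaCM.continuous
  have msoi : Monotone (ContinuousMap.setOfIdeal :
      Ideal C(StoneCech X, 𝕜) → Set (StoneCech X)) :=
    (ContinuousMap.ideal_gc _ _).monotone_l
  have mios : Monotone (ContinuousMap.idealOfSet 𝕜 :
      Set (StoneCech X) → Ideal C(StoneCech X, 𝕜)) :=
    (ContinuousMap.ideal_gc _ _).monotone_u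
  have E2 : (∀ V : ℕ → Set (StoneCech X), (∀ n, IsOpen (V n)) → (∀ n, V n ⊆ U) →
        U = ⋃ n, V n → ∃ m, 0 < m ∧ U = ⋃ n ∈ Finset.range m, V n) ↔
      (∀ Hs : ℕ → Ideal (X →ᵇ 𝕜), (∀ n, IsClosed ((Hs n : Set (X →ᵇ 𝕜)))) →
        (∀ n, Hs n ≤ H) →
        (H : Set (X →ᵇ 𝕜)) = closure ((⨆ n, Hs n : Ideal (X →ᵇ 𝕜)) : Set (X →ᵇ 𝕜)) →
        ∃ m : ℕ, 0 < m ∧ (H : Set (X →ᵇ 𝕜)) =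
          closure ((⨆ n ∈ Finset.range m, Hs n : Ideal (X →ᵇ 𝕜)) : Set (X →ᵇ 𝕜))) := by
    constructor
    · intro h2 Hs hcls hle heq
      have hcov : U = ⋃ n, ContinuousMap.setOfIdeal (T (Hs n)) := by
        have h := (keyEq _).mp heq
        rwa [show T (⨆ n, Hs n) = ⨆ n, T (Hs n) from Ideal.map_iSup _ _, setOfIdeal_iSup] at h
      obtain ⟨m, hm, hUm⟩ := h2 (fun n => ContinuousMap.setOfIdeal (T (Hs n)))
        (fun n => ContinuousMap.setOfIdeal_open _) (fun n => msoi (Tle.mpr (hle n))) hcov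
      refine ⟨m, hm, (keyEq _).mpr ?_⟩
      rw [show T (⨆ n ∈ Finset.range m, Hs n) = ⨆ n ∈ Finset.range m, T (Hs n) from
        (Ideal.map_iSup _ _).trans (iSup_congr fun n => Ideal.map_iSup _ _)]
      simp only [setOfIdeal_iSup]
      exact hUm
    · intro h2 V hVopen hVsub hcov
      set Hs : ℕ → Ideal (X →ᵇ 𝕜) := fun n =>
        Ideal.comap (Φ : (X →ᵇ 𝕜) →+* C(StoneCech X, 𝕜))
          (ContinuousMap.idealOfSet 𝕜 (V n)) with hHsdef
      have hsoi : ∀ n, ContinuousMap.setOfIdeal (T (Hs n)) = V n := fun n => by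
        rw [hHsdef, hTcomap]
        exact ContinuousMap.setOfIdeal_ofSet_of_isOpen 𝕜 (hVopen n)
      have hle : ∀ n, Hs n ≤ H := fun n => Tle.mp (by
        rw [hHsdef, hTcomap, hTH]; exact mios (hVsub n))
      have heq : (H : Set (X →ᵇ 𝕜)) = closure ((⨆ n, Hs n : Ideal (X →ᵇ 𝕜)) : Set (X →ᵇ 𝕜)) :=
        (keyEq _).mpr (by
          rw [show T (⨆ n, Hs n) = ⨆ n, T (Hs n) from Ideal.map_iSup _ _, setOfIdeal_iSup]
          simp only [hsoi]
          exact hcov)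
      obtain ⟨m, hm, hfin⟩ := h2 Hs (fun n => hcomap_closed (V n)) hle heq
      refine ⟨m, hm, ?_⟩
      have h := (keyEq _).mp hfin
      rw [show T (⨆ n ∈ Finset.range m, Hs n) = ⨆ n ∈ Finset.range m, T (Hs n) from
        (Ideal.map_iSup _ _).trans (iSup_congr fun n => Ideal.map_iSup _ _)] at h
      simp only [setOfIdeal_iSup, hsoi] at h
      exact h
  have E3 : (∀ V : ℕ → Set (StoneCech X), (∀ n, IsOpen (V n)) → (∀ n, V n ⊆ U) →
        (∀ n, V n ≠ U) → Monotone V → U ≠ ⋃ n, V n) ↔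
      (∀ Hs : ℕ → Ideal (X →ᵇ 𝕜), (∀ n, IsClosed ((Hs n : Set (X →ᵇ 𝕜)))) →
        (∀ n, Hs n ≤ H) → (∀ n, Hs n ≠ H) → Monotone Hs →
        (H : Set (X →ᵇ 𝕜)) ≠ closure (⋃ n, (Hs n : Set (X →ᵇ 𝕜)))) := by
    constructor
    · intro h3 Hs hcls hle hne hmono heq
      rw [← Submodule.coe_iSup_of_directed Hs hmono.directed_le] at heq
      have hUeq := (keyEq _).mp heq
      rw [show T (⨆ n, Hs n) = ⨆ n, T (Hs n) from Ideal.map_iSup _ _, setOfIdeal_iSup] at hUeq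
      refine h3 (fun n => ContinuousMap.setOfIdeal (T (Hs n)))
        (fun n => ContinuousMap.setOfIdeal_open _) (fun n => msoi (Tle.mpr (hle n)))
        (fun n hVU => hne n ?_) (fun a b hab => msoi (Tle.mpr (hmono hab))) hUeq
      apply Tinj
      rw [hTH, ← hVU]
      exact (ContinuousMap.idealOfSet_ofIdeal_isClosed (Tclosed (hcls n))).symm
    · intro h3 V hVopen hVsub hVne hVmono hUeq
      set Hs : ℕ → Ideal (X →ᵇ 𝕜) := fun n =>
        Ideal.comap (Φ : (X →ᵇ 𝕜) →+* C(StoneCech X, 𝕜))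
          (ContinuousMap.idealOfSet 𝕜 (V n)) with hHsdef
      have hsoi : ∀ n, ContinuousMap.setOfIdeal (T (Hs n)) = V n := fun n => by
        rw [hHsdef, hTcomap]
        exact ContinuousMap.setOfIdeal_ofSet_of_isOpen 𝕜 (hVopen n)
      have hle : ∀ n, Hs n ≤ H := fun n => Tle.mp (by
        rw [hHsdef, hTcomap, hTH]; exact mios (hVsub n))
      have hne : ∀ n, Hs n ≠ H := by
        intro n hn
        apply hVne n
        have hTn : T (Hs n) = T H := by rw [hn]
        rw [← hsoi n, hTn]
      have hmono : Monotone Hs := fun a b hab => Ideal.comap_mono (mios (hVmono hab))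
      refine h3 Hs (fun n => hcomap_closed (V n)) hle hne hmono ?_
      rw [← Submodule.coe_iSup_of_directed Hs hmono.directed_le]
      refine (keyEq _).mpr ?_
      rw [show T (⨆ n, Hs n) = ⨆ n, T (Hs n) from Ideal.map_iSup _ _, setOfIdeal_iSup]
      simp only [hsoi]
      exact hUeq
  have E1 : CountablyCompactSpace' (lambdaSet H) ↔ CountablyCompactSpace' U := by rw [hlam]
  tfae_have 1 ↔ 2 := E1.trans ((Ttop.out 0 1).trans E2)
  tfae_have 1 ↔ 3 := E1.trans ((Ttop.out 0 2).trans E3)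
  tfae_finish
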